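/- Under the hypotheses: E = [E_T E_C] ∈ ℝ^{n×m} with Eᵀ𝟙_n = 0, E_T ∈ ℝ^{n×(n−1)} of rank n−1, every column of E_C in the column space of E_T, W = diag(w) with w_k > 0, R = [I_{n−1} (E_TᵀE_T)⁻¹E_TᵀE_C], P ∈ ℝ^{m×q} a selection matrix of distinct standard basis vectors indexed by a nonempty attacked-edge set S, and Δ ∈ ℝ^{q×q} diagonal with ‖Δ‖ < ‖Pᵀ Rᵀ (R W Rᵀ)⁻¹ R P‖⁻¹ — the perturbed consensus protocol achieves consensus: for every D ≥ 1 and every x₀ ∈ ℝ^{nD}, writing L_Δ = E (W + P Δ Pᵀ) Eᵀ, the trajectory exp(−t (L_Δ ⊗ I_D)) x₀ converges, as t → ∞, to ((𝟙_n 𝟙_nᵀ / n) ⊗ I_D) x₀, which lies in the agreement set {𝟙_n ⊗ ω : ω ∈ ℝ^D}. -/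

import Mathlib

open Matrix Filter
open scoped Matrix.Norms.L2Operator Kronecker

open scoped RealInnerProductSpace

lemma euclid_inner {ι : Type*} [Fintype ι] (u v : ι → ℝ) :
    ⟪(EuclideanSpace.equiv ι ℝ).symm u, (EuclideanSpace.equiv ι ℝ).symm v⟫ = u ⬝ᵥ v := by
  simp [PiLp.inner_apply, RCLike.inner_apply, dotProduct, mul_comm]

lemma quad_le {ι : Type*} [Fintype ι] [DecidableEq ι] (A : Matrix ι ι ℝ) (u : ι → ℝ) :
    u ⬝ᵥ (A *ᵥ u) ≤ ‖A‖ * (u ⬝ᵥ u) := by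
  have h1 : u ⬝ᵥ (A *ᵥ u) =
      ⟪(EuclideanSpace.equiv ι ℝ).symm u, (EuclideanSpace.equiv ι ℝ).symm (A *ᵥ u)⟫ :=
    (euclid_inner _ _).symm
  have h2 := real_inner_le_norm ((EuclideanSpace.equiv ι ℝ).symm u)
    ((EuclideanSpace.equiv ι ℝ).symm (A *ᵥ u))
  have h3 := A.l2_opNorm_mulVec ((EuclideanSpace.equiv ι ℝ).symm u)
  have h4 : u ⬝ᵥ u = ‖(EuclideanSpace.equiv ι ℝ).symm u‖ ^ 2 := by
    rw [← euclid_inner u u, real_inner_self_eq_norm_sq]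
  calc u ⬝ᵥ (A *ᵥ u) ≤ ‖(EuclideanSpace.equiv ι ℝ).symm u‖ *
        ‖(EuclideanSpace.equiv ι ℝ).symm (A *ᵥ u)‖ := h1 ▸ h2
    _ ≤ ‖(EuclideanSpace.equiv ι ℝ).symm u‖ * (‖A‖ * ‖(EuclideanSpace.equiv ι ℝ).symm u‖) :=
        mul_le_mul_of_nonneg_left h3 (norm_nonneg _)
    _ = ‖A‖ * (u ⬝ᵥ u) := by rw [h4]; ring

lemma quad_conj {k l : Type*} [Fintype k] [Fintype l] (A : Matrix k l ℝ) (M : Matrix l l ℝ)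
    (y : k → ℝ) : y ⬝ᵥ ((A * M * Aᵀ) *ᵥ y) = (Aᵀ *ᵥ y) ⬝ᵥ (M *ᵥ (Aᵀ *ᵥ y)) := by
  rw [← Matrix.mulVec_mulVec, ← Matrix.mulVec_mulVec, Matrix.dotProduct_mulVec,
    ← Matrix.mulVec_transpose]

lemma dot_tA {a b : Type*} [Fintype a] [Fintype b] [DecidableEq b] (A : Matrix a b ℝ) (u : a → ℝ) :
    (Aᵀ *ᵥ u) ⬝ᵥ (Aᵀ *ᵥ u) = u ⬝ᵥ ((A * Aᵀ) *ᵥ u) := by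
  have h := quad_conj A 1 u
  rw [Matrix.mul_one, Matrix.one_mulVec] at h
  exact h.symm

lemma abs_diag_le' {ι : Type*} [Fintype ι] [DecidableEq ι] (d : ι → ℝ) (j : ι) :
    |d j| ≤ ‖Matrix.diagonal d‖ := by
  have h3 := (Matrix.diagonal d).l2_opNorm_mulVec (EuclideanSpace.single j (1:ℝ))
  have h2 : ((EuclideanSpace.equiv ι ℝ).symm
      (Matrix.diagonal d *ᵥ EuclideanSpace.single j (1:ℝ)) : EuclideanSpace ℝ ι)
      = EuclideanSpace.single j (d j) := by
    ext i
    show (Matrix.diagonal d *ᵥ Pi.single j 1) i = _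
    rw [Matrix.diagonal_mulVec_single, mul_one]
    simp [EuclideanSpace.single_apply, Pi.single_apply]
  rw [h2, EuclideanSpace.norm_single, EuclideanSpace.norm_single] at h3
  simpa using h3

open scoped MatrixOrder in
lemma M_posdef {m k p : Type*} [Fintype m] [Fintype k] [Fintype p]
    [DecidableEq m] [DecidableEq k] [DecidableEq p]
    (R : Matrix k m ℝ) (hRinj : ∀ y : k → ℝ, y ≠ 0 → Rᵀ *ᵥ y ≠ 0)
    (w : m → ℝ) (hw : ∀ i, 0 < w i)
    (P : Matrix m p ℝ) (d : p → ℝ)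
    (hsmall : ‖Matrix.diagonal d‖ <
      ‖Pᵀ * Rᵀ * (R * Matrix.diagonal w * Rᵀ)⁻¹ * R * P‖⁻¹) :
    (R * (Matrix.diagonal w + P * Matrix.diagonal d * Pᵀ) * Rᵀ).PosDef := by
  set Q : Matrix k k ℝ := R * Matrix.diagonal w * Rᵀ with hQdef
  set N : Matrix p p ℝ := Pᵀ * Rᵀ * Q⁻¹ * R * P with hNdef
  -- quadratic form of Q
  have hQquad : ∀ y : k → ℝ, y ⬝ᵥ (Q *ᵥ y) = ∑ i, w i * (Rᵀ *ᵥ y) i ^ 2 := by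
    intro y
    rw [hQdef, quad_conj]
    simp only [dotProduct, Matrix.mulVec_diagonal]
    exact Finset.sum_congr rfl fun i _ => by ring
  have hQpos : ∀ y : k → ℝ, y ≠ 0 → 0 < y ⬝ᵥ (Q *ᵥ y) := by
    intro y hy
    rw [hQquad]
    obtain ⟨i, hi⟩ := Function.ne_iff.mp (hRinj y hy)
    refine Finset.sum_pos' (fun i _ => mul_nonneg (hw i).le (sq_nonneg _)) ⟨i, Finset.mem_univ i, ?_⟩
    have : (Rᵀ *ᵥ y) i ≠ 0 := by simpa using hi
    exact mul_pos (hw i) (by positivity)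
  have hQH : Q.IsHermitian := by
    rw [Matrix.IsHermitian, Matrix.conjTranspose_eq_transpose_of_trivial, hQdef,
      Matrix.transpose_mul, Matrix.transpose_mul, Matrix.transpose_transpose,
      Matrix.diagonal_transpose, Matrix.mul_assoc]
  have hQPD : Q.PosDef := Matrix.PosDef.of_dotProduct_mulVec_pos hQH fun y hy => by simpa using hQpos y hy
  have hQdet : IsUnit Q.det := hQPD.det_pos.ne'.isUnit
  set S : Matrix k k ℝ := CFC.sqrt Q with hSdef
  have hSS : S * S = Q := CFC.sqrt_mul_sqrt_self Q hQPD.posSemidef.nonneg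
  have hSH : Sᵀ = S := by
    have := (CFC.sqrt_nonneg Q).posSemidef.1
    rwa [Matrix.IsHermitian, Matrix.conjTranspose_eq_transpose_of_trivial] at this
  have hSdet : IsUnit S.det := by
    have h : S.det * S.det = Q.det := by rw [← Matrix.det_mul, hSS]
    rcases eq_or_ne S.det 0 with h0 | h0
    · exfalso; rw [h0, mul_zero] at h; exact hQPD.det_pos.ne' h.symm
    · exact h0.isUnit
  have hSinv : S⁻¹ * S = 1 := Matrix.nonsing_inv_mul S hSdet
  have hQinv : Q⁻¹ = S⁻¹ * S⁻¹ := by rw [← hSS, Matrix.mul_inv_rev]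
  set G : Matrix k p ℝ := S⁻¹ * (R * P) with hGdef
  have hGT : Gᵀ = Pᵀ * Rᵀ * S⁻¹ := by
    rw [hGdef, Matrix.transpose_mul, Matrix.transpose_mul, Matrix.transpose_nonsing_inv, hSH,
      Matrix.mul_assoc]
  have hGTG : Gᵀ * G = N := by
    rw [hGT, hGdef, hNdef, hQinv]
    simp only [Matrix.mul_assoc]
  have hNnorm : ‖G * Gᵀ‖ = ‖N‖ := by
    have h1 : ‖G * Gᵀ‖ = ‖Gᵀ‖ * ‖Gᵀ‖ := by
      have := Matrix.l2_opNorm_conjTranspose_mul_self Gᵀ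
      rwa [Matrix.conjTranspose_eq_transpose_of_trivial, Matrix.transpose_transpose] at this
    have h2 : ‖N‖ = ‖G‖ * ‖G‖ := by
      have := Matrix.l2_opNorm_conjTranspose_mul_self G
      rwa [Matrix.conjTranspose_eq_transpose_of_trivial, hGTG] at this
    have h3 : ‖Gᵀ‖ = ‖G‖ := by
      have := Matrix.l2_opNorm_conjTranspose G
      rwa [Matrix.conjTranspose_eq_transpose_of_trivial] at this
    rw [h1, h2, h3]
  -- the main quadratic bound
  have hzbound : ∀ y : k → ℝ, ((Pᵀ * Rᵀ) *ᵥ y) ⬝ᵥ ((Pᵀ * Rᵀ) *ᵥ y) ≤ ‖N‖ * (y ⬝ᵥ (Q *ᵥ y)) := by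
    intro y
    set u : k → ℝ := S *ᵥ y with hudef
    have hz : (Pᵀ * Rᵀ) *ᵥ y = Gᵀ *ᵥ u := by
      rw [hudef, Matrix.mulVec_mulVec, hGT, Matrix.mul_assoc (Pᵀ * Rᵀ) S⁻¹ S, hSinv, Matrix.mul_one]
    have h1 : (Gᵀ *ᵥ u) ⬝ᵥ (Gᵀ *ᵥ u) = u ⬝ᵥ ((G * Gᵀ) *ᵥ u) := dot_tA G u
    have h2 : u ⬝ᵥ ((G * Gᵀ) *ᵥ u) ≤ ‖G * Gᵀ‖ * (u ⬝ᵥ u) := quad_le _ _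
    have h3 : u ⬝ᵥ u = y ⬝ᵥ (Q *ᵥ y) := by
      rw [hudef]
      conv_lhs => rw [← hSH]
      rw [dot_tA, hSH, hSS]
    rw [hz, h1, ← hNnorm, ← h3]
    exact h2
  -- conclude positive definiteness
  have hMH : (R * (Matrix.diagonal w + P * Matrix.diagonal d * Pᵀ) * Rᵀ).IsHermitian := by
    rw [Matrix.IsHermitian, Matrix.conjTranspose_eq_transpose_of_trivial]
    simp [Matrix.transpose_mul, Matrix.transpose_add, Matrix.mul_assoc]
  refine Matrix.PosDef.of_dotProduct_mulVec_pos hMH fun y hy => ?_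
  have hsplit : y ⬝ᵥ ((R * (Matrix.diagonal w + P * Matrix.diagonal d * Pᵀ) * Rᵀ) *ᵥ y)
      = y ⬝ᵥ (Q *ᵥ y) + ((Pᵀ * Rᵀ) *ᵥ y) ⬝ᵥ (Matrix.diagonal d *ᵥ ((Pᵀ * Rᵀ) *ᵥ y)) := by
    rw [quad_conj, Matrix.add_mulVec, dotProduct_add]
    congr 1
    · rw [hQdef, quad_conj]
    · rw [quad_conj P (Matrix.diagonal d) (Rᵀ *ᵥ y), Matrix.mulVec_mulVec]
  set z : p → ℝ := (Pᵀ * Rᵀ) *ᵥ y with hzdef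
  have hzz : 0 ≤ z ⬝ᵥ z := Finset.sum_nonneg fun j _ => mul_self_nonneg _
  have hdz : -(‖Matrix.diagonal d‖ * (z ⬝ᵥ z)) ≤ z ⬝ᵥ (Matrix.diagonal d *ᵥ z) := by
    have hterm : ∀ j : p, -(‖Matrix.diagonal d‖ * (z j * z j)) ≤ z j * (d j * z j) := by
      intro j
      have h1 : |d j| * (z j * z j) ≤ ‖Matrix.diagonal d‖ * (z j * z j) :=
        mul_le_mul_of_nonneg_right (abs_diag_le' d j) (mul_self_nonneg _)
      nlinarith [neg_abs_le (d j), abs_nonneg (d j), mul_self_nonneg (z j)]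
    calc -(‖Matrix.diagonal d‖ * (z ⬝ᵥ z)) = ∑ j, -(‖Matrix.diagonal d‖ * (z j * z j)) := by
          rw [dotProduct, Finset.mul_sum, ← Finset.sum_neg_distrib]
      _ ≤ ∑ j, z j * (d j * z j) := Finset.sum_le_sum fun j _ => hterm j
      _ = z ⬝ᵥ (Matrix.diagonal d *ᵥ z) := by
          simp only [dotProduct, Matrix.mulVec_diagonal]
  have hzq := hzbound y
  rw [← hzdef] at hzq
  have hq := hQpos y hy
  have hgoal : 0 < y ⬝ᵥ (Q *ᵥ y) + z ⬝ᵥ (Matrix.diagonal d *ᵥ z) := by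
    rcases eq_or_ne ‖N‖ 0 with hN0 | hN0
    · have hzz0 : z ⬝ᵥ z = 0 := le_antisymm (by rw [hN0] at hzq; linarith) hzz
      have := hdz
      rw [hzz0, mul_zero, neg_zero] at this
      linarith
    · have hNpos : 0 < ‖N‖ := (norm_nonneg N).lt_of_ne' hN0
      have h1 : ‖Matrix.diagonal d‖ * ‖N‖ < 1 := by
        have h2 := mul_lt_mul_of_pos_right hsmall hNpos
        rwa [inv_mul_cancel₀ hN0] at h2
      have h3 : ‖Matrix.diagonal d‖ * (z ⬝ᵥ z) ≤
          ‖Matrix.diagonal d‖ * (‖N‖ * (y ⬝ᵥ (Q *ᵥ y))) :=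
        mul_le_mul_of_nonneg_left hzq (norm_nonneg _)
      nlinarith [mul_lt_mul_of_pos_right h1 hq]
  have hstar : star y = y := by simp
  rw [hstar, hsplit]
  exact hgoal

lemma exp_tendsto_proj {N : Type*} [Fintype N] [DecidableEq N]
    (B Q : Matrix N N ℝ) (hB : B.PosSemidef) (hPB : Q * B = 0)
    (hker : ∀ x, B *ᵥ x = 0 → Q *ᵥ x = x) :
    Tendsto (fun t : ℝ => NormedSpace.exp (-(t • B))) atTop (nhds Q) := by
  have hH : B.IsHermitian := hB.1
  set U : Matrix N N ℝ := (hH.eigenvectorUnitary : Matrix N N ℝ) with hUdef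
  set ev : N → ℝ := hH.eigenvalues with hevdef
  have hUU : U * star U = 1 := mem_unitaryGroup_iff.mp hH.eigenvectorUnitary.2
  have hUU' : star U * U = 1 := mem_unitaryGroup_iff'.mp hH.eigenvectorUnitary.2
  have hUinv : U⁻¹ = star U := Matrix.inv_eq_left_inv hUU'
  have hUisUnit : IsUnit U := ⟨⟨U, star U, hUU, hUU'⟩, rfl⟩
  have hspec : B = U * Matrix.diagonal ev * star U := by
    have h := hH.spectral_theorem
    rwa [Unitary.conjStarAlgAut_apply, RCLike.ofReal_real_eq_id, Function.id_comp] at h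
  have hexp : ∀ t : ℝ, NormedSpace.exp (-(t • B)) =
      U * Matrix.diagonal (fun i => Real.exp (-(t * ev i))) * star U := by
    intro t
    have hdg : Matrix.diagonal (fun i => -(t * ev i)) = -(t • Matrix.diagonal ev) := by
      rw [← Matrix.diagonal_smul, ← Matrix.diagonal_neg]
      congr 1
    have h1 : -(t • B) = U * Matrix.diagonal (fun i => -(t * ev i)) * U⁻¹ := by
      rw [hUinv, hspec, hdg]
      rw [Matrix.mul_neg, Matrix.neg_mul, mul_smul_comm, smul_mul_assoc]
    rw [h1, Matrix.exp_conj U _ hUisUnit, Matrix.exp_diagonal, hUinv]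
    congr 2
    rw [Pi.exp_def]
    funext i
    rw [← Real.exp_eq_exp_ℝ]
  set L : Matrix N N ℝ :=
    U * Matrix.diagonal (fun i => if ev i = 0 then (1:ℝ) else 0) * star U with hLdef
  have hdiag : Tendsto (fun t : ℝ => Matrix.diagonal (fun i => Real.exp (-(t * ev i)))) atTop
      (nhds (Matrix.diagonal (fun i => if ev i = 0 then (1:ℝ) else 0))) := by
    apply tendsto_pi_nhds.mpr
    intro i
    rw [tendsto_pi_nhds]
    intro j
    by_cases hij : i = j
    · subst hij
      simp only [Matrix.diagonal_apply_eq]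
      by_cases h0 : ev i = 0
      · simp [h0]
      · have hpos : 0 < ev i := lt_of_le_of_ne (hB.eigenvalues_nonneg i) (Ne.symm h0)
        simp only [if_neg h0]
        exact Real.tendsto_exp_atBot.comp
          (tendsto_neg_atTop_atBot.comp (tendsto_id.atTop_mul_const hpos))
    · simp [Matrix.diagonal_apply_ne _ hij]
  have hcont : Continuous (fun M : Matrix N N ℝ => U * M * star U) :=
    (continuous_const.matrix_mul continuous_id).matrix_mul continuous_const
  have hlim : Tendsto (fun t : ℝ => NormedSpace.exp (-(t • B))) atTop (nhds L) := by
    have := (hcont.tendsto _).comp hdiag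
    simpa [Function.comp_def, hexp] using this
  have hBU : B * U = U * Matrix.diagonal ev := by
    rw [hspec, mul_assoc, mul_assoc, hUU', mul_one]
  have hcols : ∀ j, Q *ᵥ (fun i => U i j) = fun i =>
      (if ev j = 0 then (1:ℝ) else 0) * U i j := by
    intro j
    have hBu : B *ᵥ (fun i => U i j) = ev j • (fun i => U i j) := by
      funext i
      have h := congrFun (congrFun hBU i) j
      rw [Matrix.mul_apply, Matrix.mul_diagonal] at h
      simpa [Matrix.mulVec, dotProduct, mul_comm] using h
    by_cases h0 : ev j = 0
    · have := hker _ (by rw [hBu, h0, zero_smul])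
      rw [this]
      funext i; rw [if_pos h0, one_mul]
    · have h1 : Q *ᵥ (B *ᵥ (fun i => U i j)) = 0 := by
        rw [Matrix.mulVec_mulVec, hPB, Matrix.zero_mulVec]
      rw [hBu, Matrix.mulVec_smul] at h1
      have h2 := (smul_eq_zero.mp h1).resolve_left h0
      rw [h2]
      funext i; rw [if_neg h0, zero_mul]; rfl
  have hLU : L = Q := by
    have key : ∀ M1 M2 : Matrix N N ℝ, M1 * U = M2 * U → M1 = M2 := by
      intro M1 M2 h
      have h2 := congrArg (fun M => M * star U) h
      simpa [mul_assoc, hUU, mul_one] using h2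
    have hLU1 : L * U = U * Matrix.diagonal (fun i => if ev i = 0 then (1:ℝ) else 0) := by
      rw [hLdef, mul_assoc, mul_assoc, hUU', mul_one]
    have hQU : Q * U = U * Matrix.diagonal (fun i => if ev i = 0 then (1:ℝ) else 0) := by
      ext i j
      have h := congrFun (hcols j) i
      rw [Matrix.mul_apply, Matrix.mul_diagonal]
      simpa [Matrix.mulVec, dotProduct, mul_comm] using h
    exact key L Q (by rw [hLU1, hQU])
  rwa [hLU] at hlim

lemma dot_self_pos {ι : Type*} [Fintype ι] {v : ι → ℝ} (hv : v ≠ 0) : 0 < v ⬝ᵥ v := by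
  obtain ⟨i, hi⟩ := Function.ne_iff.mp hv
  refine Finset.sum_pos' (fun j _ => mul_self_nonneg _) ⟨i, Finset.mem_univ i, ?_⟩
  exact mul_self_pos.mpr (by simpa using hi)

/-- Under the multi-attack robust-stability hypotheses, the perturbed
continuous-time consensus protocol achieves consensus: for every `D ≥ 1` and every initial state
`x₀ ∈ ℝ^{nD}`, with `L_Δ = E (W + P Δ Pᵀ) Eᵀ`, the trajectory `exp(−t (L_Δ ⊗ I_D)) x₀` converges
as `t → ∞` to `((𝟙𝟙ᵀ/n) ⊗ I_D) x₀`, which lies in the agreement set `{𝟙ₙ ⊗ ω : ω ∈ ℝ^D}`. -/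
theorem perturbed_consensus_converges_to_agreement
    (n c q : ℕ) (hn : 2 ≤ n) (hq : 0 < q)
    (ET : Matrix (Fin n) (Fin (n - 1)) ℝ) (EC : Matrix (Fin n) (Fin c) ℝ)
    (E : Matrix (Fin n) (Fin (n - 1) ⊕ Fin c) ℝ)
    (hE : E = Matrix.fromCols ET EC)
    (hE1 : Eᵀ *ᵥ (fun _ => (1 : ℝ)) = 0)
    (hrankT : ET.rank = n - 1)
    (hcol : ∀ j : Fin c, ∃ x : Fin (n - 1) → ℝ, ET *ᵥ x = fun i => EC i j)
    (w : Fin (n - 1) ⊕ Fin c → ℝ) (hw : ∀ k, 0 < w k)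
    (R : Matrix (Fin (n - 1)) (Fin (n - 1) ⊕ Fin c) ℝ)
    (hR : R = Matrix.fromCols (1 : Matrix (Fin (n - 1)) (Fin (n - 1)) ℝ)
      ((ETᵀ * ET)⁻¹ * ETᵀ * EC))
    (s : Fin q → Fin (n - 1) ⊕ Fin c) (hs : Function.Injective s)
    (P : Matrix (Fin (n - 1) ⊕ Fin c) (Fin q) ℝ)
    (hP : P = Matrix.of fun i j => if i = s j then (1 : ℝ) else 0)
    (d : Fin q → ℝ)
    (hsmall : ‖Matrix.diagonal d‖ <
      ‖Pᵀ * Rᵀ * (R * Matrix.diagonal w * Rᵀ)⁻¹ * R * P‖⁻¹)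
    (LΔ : Matrix (Fin n) (Fin n) ℝ)
    (hLΔ : LΔ = E * (Matrix.diagonal w + P * Matrix.diagonal d * Pᵀ) * Eᵀ)
    (D : ℕ) (hD : 1 ≤ D) (x₀ : Fin n × Fin D → ℝ) :
    Tendsto
      (fun t : ℝ =>
        (NormedSpace.exp (-(t • (LΔ ⊗ₖ (1 : Matrix (Fin D) (Fin D) ℝ))))) *ᵥ x₀)
      atTop
      (nhds ((((n : ℝ)⁻¹ • Matrix.of (fun _ _ : Fin n => (1 : ℝ))) ⊗ₖ
        (1 : Matrix (Fin D) (Fin D) ℝ)) *ᵥ x₀)) ∧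
    ∃ ω : Fin D → ℝ,
      ((((n : ℝ)⁻¹ • Matrix.of (fun _ _ : Fin n => (1 : ℝ))) ⊗ₖ
        (1 : Matrix (Fin D) (Fin D) ℝ)) *ᵥ x₀) = fun p => ω p.2 := by
  have hn0 : (n : ℝ) ≠ 0 := Nat.cast_ne_zero.mpr (by omega)
  -- ET has trivial kernel
  have hETinj : ∀ x : Fin (n - 1) → ℝ, ET *ᵥ x = 0 → x = 0 := by
    have h1 := LinearMap.finrank_range_add_finrank_ker ET.mulVecLin
    have h2 : Module.finrank ℝ (LinearMap.range ET.mulVecLin) = n - 1 := hrankT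
    rw [h2, Module.finrank_pi, Fintype.card_fin] at h1
    have h3 : Module.finrank ℝ (LinearMap.ker ET.mulVecLin) = 0 := by omega
    have h4 : LinearMap.ker ET.mulVecLin = ⊥ := Submodule.finrank_eq_zero.mp h3
    intro x hx
    have : x ∈ LinearMap.ker ET.mulVecLin := by
      rw [LinearMap.mem_ker, Matrix.mulVecLin_apply, hx]
    rw [h4, Submodule.mem_bot] at this
    exact this
  -- (ETᵀ * ET) is positive definite, hence invertible
  have hETETpd : (ETᵀ * ET).PosDef := by
    refine Matrix.PosDef.of_dotProduct_mulVec_pos (by simpa using Matrix.isHermitian_conjTranspose_mul_self ET) fun x hx => ?_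
    have h1 := dot_tA ETᵀ x
    rw [Matrix.transpose_transpose] at h1
    have h2 : ET *ᵥ x ≠ 0 := fun h => hx (hETinj x h)
    have := dot_self_pos h2
    rw [h1] at this
    simpa using this
  have hETETinv : (ETᵀ * ET)⁻¹ * (ETᵀ * ET) = 1 :=
    Matrix.nonsing_inv_mul _ hETETpd.det_pos.ne'.isUnit
  -- E = ET * R
  have hX : ET * ((ETᵀ * ET)⁻¹ * ETᵀ * EC) = EC := by
    set X₀ : Matrix (Fin (n - 1)) (Fin c) ℝ := Matrix.of fun i j => (hcol j).choose i with hX₀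
    have hX0 : ET * X₀ = EC := by
      ext i j
      have h := congrFun (hcol j).choose_spec i
      simpa [hX₀, Matrix.mul_apply, Matrix.mulVec, dotProduct] using h
    calc ET * ((ETᵀ * ET)⁻¹ * ETᵀ * EC) = ET * ((ETᵀ * ET)⁻¹ * (ETᵀ * ET) * X₀) := by
          rw [← hX0]; simp only [Matrix.mul_assoc]
      _ = ET * X₀ := by rw [hETETinv, Matrix.one_mul]
      _ = EC := hX0
  have hER : E = ET * R := by
    rw [hE, hR, Matrix.mul_fromCols, Matrix.mul_one, hX]
  -- R has full row rank
  have hRinj : ∀ y : Fin (n - 1) → ℝ, y ≠ 0 → Rᵀ *ᵥ y ≠ 0 := by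
    intro y hy hcontra
    apply hy
    funext i
    have h := congrFun hcontra (Sum.inl i)
    rw [hR, Matrix.transpose_fromCols, Matrix.fromRows_mulVec] at h
    simpa using h
  -- the reduced matrix is positive definite
  have hMPD := M_posdef R hRinj w hw P d hsmall
  set M2 : Matrix (Fin (n - 1) ⊕ Fin c) (Fin (n - 1) ⊕ Fin c) ℝ :=
    Matrix.diagonal w + P * Matrix.diagonal d * Pᵀ with hM2
  set M : Matrix (Fin (n - 1)) (Fin (n - 1)) ℝ := R * M2 * Rᵀ with hM
  have hMT : Mᵀ = M := by
    have := hMPD.1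
    rwa [Matrix.IsHermitian, Matrix.conjTranspose_eq_transpose_of_trivial] at this
  have hLfact : LΔ = ET * M * ETᵀ := by
    rw [hLΔ, hER, hM, hM2]
    simp only [Matrix.transpose_mul, Matrix.mul_assoc]
  have hLH : LΔ.IsHermitian := by
    rw [Matrix.IsHermitian, Matrix.conjTranspose_eq_transpose_of_trivial, hLfact]
    simp only [Matrix.transpose_mul, Matrix.transpose_transpose, hMT, Matrix.mul_assoc]
  have hLpsd : LΔ.PosSemidef := by
    refine Matrix.PosSemidef.of_dotProduct_mulVec_nonneg hLH fun x => ?_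
    have h1 : x ⬝ᵥ (LΔ *ᵥ x) = (ETᵀ *ᵥ x) ⬝ᵥ (M *ᵥ (ETᵀ *ᵥ x)) := by
      rw [hLfact, quad_conj]
    have h2 := hMPD.posSemidef.dotProduct_mulVec_nonneg (ETᵀ *ᵥ x)
    simp only [star_trivial] at h2 ⊢
    rw [h1]
    exact h2
  -- kernel of ETᵀ is spanned by the all-ones vector
  have hET1 : ETᵀ *ᵥ (fun _ => (1 : ℝ)) = 0 := by
    funext i
    have h := congrFun hE1 (Sum.inl i)
    rw [hE, Matrix.transpose_fromCols, Matrix.fromRows_mulVec] at h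
    simpa using h
  have hone_ne : (fun _ => (1 : ℝ)) ≠ (0 : Fin n → ℝ) := by
    intro h
    have := congrFun h ⟨0, by omega⟩
    simpa using this
  have hkerspan : ∀ y : Fin n → ℝ, ETᵀ *ᵥ y = 0 → ∃ a : ℝ, y = a • (fun _ => (1 : ℝ)) := by
    have h1 := LinearMap.finrank_range_add_finrank_ker (ETᵀ).mulVecLin
    have h2 : Module.finrank ℝ (LinearMap.range (ETᵀ).mulVecLin) = n - 1 := by
      have : (ETᵀ).rank = n - 1 := by rw [Matrix.rank_transpose]; exact hrankT
      exact this
    rw [h2, Module.finrank_pi, Fintype.card_fin] at h1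
    have hker1 : Module.finrank ℝ (LinearMap.ker (ETᵀ).mulVecLin) = 1 := by omega
    have hmem : (fun _ => (1 : ℝ)) ∈ LinearMap.ker (ETᵀ).mulVecLin := by
      rw [LinearMap.mem_ker, Matrix.mulVecLin_apply, hET1]
    have hle : (ℝ ∙ (fun _ => (1 : ℝ) : Fin n → ℝ)) ≤ LinearMap.ker (ETᵀ).mulVecLin := by
      rw [Submodule.span_singleton_le_iff_mem]; exact hmem
    have hspan1 : Module.finrank ℝ (ℝ ∙ (fun _ => (1 : ℝ) : Fin n → ℝ)) = 1 :=
      finrank_span_singleton hone_ne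
    have heq : (ℝ ∙ (fun _ => (1 : ℝ) : Fin n → ℝ)) = LinearMap.ker (ETᵀ).mulVecLin :=
      Submodule.eq_of_le_of_finrank_le hle (by rw [hker1, hspan1])
    intro y hy
    have : y ∈ LinearMap.ker (ETᵀ).mulVecLin := by
      rw [LinearMap.mem_ker, Matrix.mulVecLin_apply, hy]
    rw [← heq, Submodule.mem_span_singleton] at this
    obtain ⟨a, ha⟩ := this
    exact ⟨a, ha.symm⟩
  -- kernel of LΔ
  have hkerL : ∀ y : Fin n → ℝ, LΔ *ᵥ y = 0 → ∃ a : ℝ, y = a • (fun _ => (1 : ℝ)) := by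
    intro y hy
    apply hkerspan
    by_contra hne
    have hpos := hMPD.dotProduct_mulVec_pos hne
    simp only [star_trivial] at hpos
    have h0 : y ⬝ᵥ (LΔ *ᵥ y) = 0 := by rw [hy, dotProduct_zero]
    rw [hLfact, quad_conj] at h0
    exact absurd h0 (ne_of_gt hpos)
  -- the projection matrix
  set Prj : Matrix (Fin n) (Fin n) ℝ :=
    (n : ℝ)⁻¹ • Matrix.of (fun _ _ : Fin n => (1 : ℝ)) with hPrj
  have hPrjone : Prj *ᵥ (fun _ => (1 : ℝ)) = fun _ => (1 : ℝ) := by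
    funext i
    simp only [hPrj, Matrix.mulVec, dotProduct, Matrix.smul_apply, Matrix.of_apply,
      smul_eq_mul, mul_one]
    rw [Finset.sum_const, Finset.card_univ, Fintype.card_fin, nsmul_eq_mul]
    exact mul_inv_cancel₀ hn0
  have hkerPrj : ∀ y : Fin n → ℝ, LΔ *ᵥ y = 0 → Prj *ᵥ y = y := by
    intro y hy
    obtain ⟨a, ha⟩ := hkerL y hy
    rw [ha, Matrix.mulVec_smul, hPrjone]
  have hL1 : LΔ *ᵥ (fun _ => (1 : ℝ)) = 0 := by
    rw [hLΔ, ← Matrix.mulVec_mulVec, ← Matrix.mulVec_mulVec, hE1, Matrix.mulVec_zero,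
      Matrix.mulVec_zero]
  have hPrjL : Prj * LΔ = 0 := by
    have hLT : LΔᵀ = LΔ := by
      have := hLH
      rwa [Matrix.IsHermitian, Matrix.conjTranspose_eq_transpose_of_trivial] at this
    have hcolsum : ∀ j, ∑ k, LΔ k j = 0 := by
      intro j
      have h := congrFun hL1 j
      rw [← hLT] at h
      simpa [Matrix.mulVec, dotProduct] using h
    ext i j
    simp only [hPrj, Matrix.mul_apply, Matrix.smul_apply, Matrix.of_apply, smul_eq_mul, one_mul,
      Matrix.zero_apply]
    rw [← Finset.mul_sum, hcolsum, mul_zero]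
  -- Kronecker lift
  have hkron : ∀ (A : Matrix (Fin n) (Fin n) ℝ) (x : Fin n × Fin D → ℝ) (pp : Fin n × Fin D),
      ((A ⊗ₖ (1 : Matrix (Fin D) (Fin D) ℝ)) *ᵥ x) pp = (A *ᵥ fun j => x (j, pp.2)) pp.1 := by
    rintro A x ⟨i, e⟩
    simp only [Matrix.mulVec, dotProduct, Matrix.kroneckerMap_apply, Matrix.one_apply]
    rw [Fintype.sum_prod_type]
    refine Finset.sum_congr rfl fun j _ => ?_
    simp [mul_ite, ite_mul, Finset.sum_ite_eq]
  have hBigPsd : (LΔ ⊗ₖ (1 : Matrix (Fin D) (Fin D) ℝ)).PosSemidef := by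
    refine Matrix.PosSemidef.of_dotProduct_mulVec_nonneg ?_ ?_
    · rw [Matrix.IsHermitian, Matrix.conjTranspose_eq_transpose_of_trivial,
        ← Matrix.kroneckerMap_transpose]
      have hLT : LΔᵀ = LΔ := by
        have := hLH
        rwa [Matrix.IsHermitian, Matrix.conjTranspose_eq_transpose_of_trivial] at this
      rw [hLT, Matrix.transpose_one]
    · intro x
      simp only [star_trivial]
      have h1 : x ⬝ᵥ ((LΔ ⊗ₖ (1 : Matrix (Fin D) (Fin D) ℝ)) *ᵥ x)
          = ∑ e : Fin D, (fun j => x (j, e)) ⬝ᵥ (LΔ *ᵥ fun j => x (j, e)) := by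
        simp only [dotProduct, hkron]
        rw [Fintype.sum_prod_type, Finset.sum_comm]
      rw [h1]
      refine Finset.sum_nonneg fun e _ => ?_
      have := hLpsd.dotProduct_mulVec_nonneg (fun j => x (j, e))
      simpa using this
  have hPrjbig : (Prj ⊗ₖ (1 : Matrix (Fin D) (Fin D) ℝ)) * (LΔ ⊗ₖ (1 : Matrix (Fin D) (Fin D) ℝ))
      = 0 := by
    rw [← Matrix.mul_kronecker_mul, hPrjL, Matrix.zero_kronecker]
  have hkerbig : ∀ x : Fin n × Fin D → ℝ, (LΔ ⊗ₖ (1 : Matrix (Fin D) (Fin D) ℝ)) *ᵥ x = 0 →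
      (Prj ⊗ₖ (1 : Matrix (Fin D) (Fin D) ℝ)) *ᵥ x = x := by
    intro x hx
    funext pp
    rw [hkron]
    have hxe : LΔ *ᵥ (fun j => x (j, pp.2)) = 0 := by
      funext j
      have h := congrFun hx (j, pp.2)
      rw [hkron] at h
      exact h
    rw [hkerPrj _ hxe]
  have hmat := exp_tendsto_proj _ _ hBigPsd hPrjbig hkerbig
  have hcont : Continuous fun M : Matrix (Fin n × Fin D) (Fin n × Fin D) ℝ => M *ᵥ x₀ :=
    continuous_id.matrix_mulVec continuous_const
  constructor
  · have := (hcont.tendsto _).comp hmat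
    simpa [Function.comp_def] using this
  · refine ⟨fun e => (n : ℝ)⁻¹ * ∑ j, x₀ (j, e), ?_⟩
    funext pp
    rw [show (((n : ℝ)⁻¹ • Matrix.of (fun _ _ : Fin n => (1 : ℝ))) ⊗ₖ
        (1 : Matrix (Fin D) (Fin D) ℝ)) = Prj ⊗ₖ (1 : Matrix (Fin D) (Fin D) ℝ) from rfl, hkron]
    simp only [hPrj, Matrix.mulVec, dotProduct, Matrix.smul_apply, Matrix.of_apply,
      smul_eq_mul, one_mul]
    rw [← Finset.mul_sum]
    ring
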